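/- Let f ∈ ℤ[x] and g ∈ ℤ[x] divide f with deg g = δ ≥ 1, and suppose ρ > 0 is an upper bound on the absolute values of all complex roots of f. If |lc(g)| ≤ |lc(f)|, then for each 0 ≤ i ≤ δ the absolute value of the coefficient of x^i in g is at most |lc(f)| · C(δ, i) · ρ^{δ−i} (the binomial bound). -/

import Mathlib

open Polynomial

/-- The binomial bound: if `g ∣ f` in `ℤ[x]`, `deg g = δ ≥ 1`, every complex root of `f`
has absolute value at most `ρ > 0`, and `|lc(g)| ≤ |lc(f)|`, then
`|coeff i g| ≤ |lc(f)| · C(δ,i) · ρ^{δ−i}` for `0 ≤ i ≤ δ`. -/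
theorem binomial_bound (f g : Polynomial ℤ) (hdvd : g ∣ f)
    (δ : ℕ) (hδ : g.natDegree = δ) (hδ1 : 1 ≤ δ)
    (ρ : ℝ) (hρ : 0 < ρ)
    (hroots : ∀ α : ℂ, (f.map (Int.castRingHom ℂ)).eval α = 0 → ‖α‖ ≤ ρ)
    (hlc : |g.leadingCoeff| ≤ |f.leadingCoeff|) :
    ∀ i ≤ δ, |(g.coeff i : ℝ)| ≤ |(f.leadingCoeff : ℝ)| * (δ.choose i) * ρ ^ (δ - i) := by
  intro i hi
  -- f ≠ 0
  have hf0 : f ≠ 0 := by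
    intro h
    have := hroots ((ρ + 1 : ℝ) : ℂ) (by simp [h])
    rw [Complex.norm_real, Real.norm_eq_abs, abs_of_pos (by linarith)] at this
    linarith
  have hinj : Function.Injective (Int.castRingHom ℂ) := fun a b h => by simpa using h
  set G := g.map (Int.castRingHom ℂ) with hG
  have hGdeg : G.natDegree = δ := by rw [hG, natDegree_map_eq_of_injective hinj, hδ]
  have hg0 : g ≠ 0 := by
    intro h
    rw [h, natDegree_zero] at hδ; omega
  have hG0 : G ≠ 0 := by
    simpa [hG, Polynomial.map_eq_zero_iff hinj] using hg0
  have hGlc : G.leadingCoeff = (g.leadingCoeff : ℂ) := by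
    rw [hG, leadingCoeff_map_of_injective hinj]; rfl
  have hlcne : G.leadingCoeff ≠ 0 := leadingCoeff_ne_zero.mpr hG0
  set c : ℂ := (G.leadingCoeff)⁻¹ with hc
  have hcne : c ≠ 0 := inv_ne_zero hlcne
  set p : Polynomial ℂ := C c * G with hp
  have hpmonic : p.Monic := by
    rw [Monic, hp, leadingCoeff_mul, leadingCoeff_C, hc, inv_mul_cancel₀ hlcne]
  have hpdeg : p.natDegree = δ := by
    rw [hp, natDegree_C_mul hcne, hGdeg]
  have hsplit : (p.map (RingHom.id ℂ)).Splits := IsAlgClosed.splits _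
  have hrootsG : ∀ z ∈ (p.map (RingHom.id ℂ)).roots, ‖z‖ ≤ ρ := by
    intro z hz
    rw [Polynomial.map_id] at hz
    rw [hp, roots_C_mul _ hcne] at hz
    have hzr : G.IsRoot z := isRoot_of_mem_roots hz
    have hGF : G ∣ f.map (Int.castRingHom ℂ) := Polynomial.map_dvd _ hdvd
    obtain ⟨q, hq⟩ := hGF
    have : (f.map (Int.castRingHom ℂ)).eval z = 0 := by
      rw [hq, eval_mul, hzr.eq_zero, zero_mul]
    simpa using hroots z this
  have hbound := coeff_le_of_roots_le i hpmonic hsplit hrootsG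
  rw [Polynomial.map_id, hpdeg] at hbound
  -- relate coeff of G and p
  have hcoeff : (g.coeff i : ℂ) = G.leadingCoeff * p.coeff i := by
    rw [hp, coeff_C_mul, hc, ← mul_assoc, mul_inv_cancel₀ hlcne, one_mul, hG, coeff_map]
    rfl
  have habs : |(g.coeff i : ℝ)| = ‖G.leadingCoeff‖ * ‖p.coeff i‖ := by
    have : ‖(g.coeff i : ℂ)‖ = ‖G.leadingCoeff‖ * ‖p.coeff i‖ := by
      rw [hcoeff, norm_mul]
    rw [← Real.norm_eq_abs, ← Complex.norm_real]
    push_cast at this ⊢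
    simpa using this
  rw [habs, hGlc]
  have h1 : ‖(g.leadingCoeff : ℂ)‖ = |(g.leadingCoeff : ℝ)| := by
    rw [show ((g.leadingCoeff : ℂ)) = ((g.leadingCoeff : ℝ) : ℂ) by push_cast; rfl,
      Complex.norm_real, Real.norm_eq_abs]
  rw [h1]
  have h2 : |(g.leadingCoeff : ℝ)| ≤ |(f.leadingCoeff : ℝ)| := by
    exact_mod_cast (by exact_mod_cast hlc : (|g.leadingCoeff| : ℝ) ≤ (|f.leadingCoeff| : ℝ))
  calc |(g.leadingCoeff : ℝ)| * ‖p.coeff i‖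
      ≤ |(f.leadingCoeff : ℝ)| * (ρ ^ (δ - i) * (δ.choose i)) := by
        apply mul_le_mul h2 hbound (norm_nonneg _) (abs_nonneg _)
    _ = |(f.leadingCoeff : ℝ)| * (δ.choose i) * ρ ^ (δ - i) := by ring
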